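/- Let B > 1 and φ ∈ ℝ with |φ| < 1/B, set Φ = (1+φ)/(1−φ) and ξ = −φB ∈ (−1,1). Let (x_i)_{i≥0} be a sequence with x_i ∈ (−1, 1) for all i, satisfying the balance relation Φ(B+x_{i+1})(1+x_i)(1−x_{i+1}) = (B−x_{i+1})(1−x_i)(1+x_{i+1}) for every i. If x_0 ∈ (ξ, 1), then (x_i) is strictly increasing and converges to 1; if x_0 ∈ (−1, ξ), then (x_i) is strictly decreasing and converges to −1. -/

import Mathlib

open Filter

set_option maxHeartbeats 1000000 in
/-- One step of the dynamics: if the current state exceeds ξ, the next state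
exceeds both the current state and ξ. -/
lemma step_inc (B φ Φ ξ : ℝ) (hB : 1 < B) (hφ : |φ| < 1 / B)
    (hΦ : Φ = (1 + φ) / (1 - φ)) (hξ : ξ = -φ * B)
    {x y : ℝ} (hx1 : -1 < x) (hx2 : x < 1) (hy1 : -1 < y) (hy2 : y < 1)
    (hbal : Φ * (B + y) * (1 + x) * (1 - y) = (B - y) * (1 - x) * (1 + y))
    (hxξ : ξ < x) : x < y ∧ ξ < y := by
  have hB0 : (0:ℝ) < B := by linarith
  have hφB := (abs_lt.mp hφ)
  have hφ1 : |φ| < 1 := lt_trans hφ (by rw [div_lt_one hB0]; exact hB)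
  have hφlt := (abs_lt.mp hφ1)
  have h1mφ : (0:ℝ) < 1 - φ := by linarith [hφlt.2]
  have h1pφ : (0:ℝ) < 1 + φ := by linarith [hφlt.1]
  have hξabs : |ξ| < 1 := by
    rw [hξ, abs_mul, abs_neg, abs_of_pos hB0]
    exact (lt_div_iff₀ hB0).mp hφ
  have hξ1 : -1 < ξ ∧ ξ < 1 := abs_lt.mp hξabs
  have hΦmul : Φ * (1 - φ) = 1 + φ := by rw [hΦ]; field_simp
  have hP : (1 + φ) * (B + y) * (1 + x) * (1 - y)
      = (1 - φ) * ((B - y) * (1 - x) * (1 + y)) := by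
    linear_combination (1 - φ) * hbal - ((B + y) * (1 + x) * (1 - y)) * hΦmul
  -- Claim A : ξ < y
  have hyξ : ξ < y := by
    by_contra hcon
    push_neg at hcon  -- y ≤ ξ
    have hByξ : (0:ℝ) < B + y * ξ := by nlinarith [hξ1.1, hξ1.2]
    have hmono : (1 + ξ) * (B - ξ) * ((1 - y) * (B + y))
        - (1 + y) * (B - y) * ((1 - ξ) * (B + ξ))
        = 2 * (ξ - y) * (B - 1) * (B + y * ξ) := by ring
    have h2 : (0:ℝ) ≤ 2 * (ξ - y) * (B - 1) * (B + y * ξ) :=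
      mul_nonneg (mul_nonneg (mul_nonneg (by norm_num) (by linarith)) (by linarith))
        (le_of_lt hByξ)
    have h3 : (1 + y) * (B - y) * ((1 - ξ) * (B + ξ))
        ≤ (1 + ξ) * (B - ξ) * ((1 - y) * (B + y)) := by linarith [hmono, h2]
    have h4 : (1 - φ) * (1 - x) * ((1 + y) * (B - y) * ((1 - ξ) * (B + ξ)))
        ≤ (1 - φ) * (1 - x) * ((1 + ξ) * (B - ξ) * ((1 - y) * (B + y))) := by
      have hpos : (0:ℝ) ≤ (1 - φ) * (1 - x) := by nlinarith
      exact mul_le_mul_of_nonneg_left h3 hpos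
    -- rewrite LHS of h4 using hP
    have hP2 : (1 + φ) * (B + y) * (1 + x) * (1 - y) * ((1 - ξ) * (B + ξ))
        = (1 - φ) * ((B - y) * (1 - x) * (1 + y)) * ((1 - ξ) * (B + ξ)) := by
      rw [hP]
    have h5 : (1 + φ) * (B + ξ) * ((1 + x) * (1 - ξ) * ((1 - y) * (B + y)))
        ≤ (1 - φ) * (B - ξ) * ((1 - x) * (1 + ξ) * ((1 - y) * (B + y))) := by
      linarith [h4, hP2]
    have heq : (1 + φ) * (B + ξ) = (1 - φ) * (B - ξ) := by rw [hξ]; ring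
    have heq4 : (1 + φ) * (B + ξ) * ((1 + x) * (1 - ξ) * ((1 - y) * (B + y)))
        = (1 - φ) * (B - ξ) * ((1 + x) * (1 - ξ) * ((1 - y) * (B + y))) := by
      rw [heq]
    have h6 : 2 * ((1 - φ) * (B - ξ)) * ((1 - y) * (B + y)) * (x - ξ) ≤ 0 := by
      linarith [h5, heq4]

    have hpos6 : 0 < 2 * ((1 - φ) * (B - ξ)) * ((1 - y) * (B + y)) * (x - ξ) := by
      have h1 : (0:ℝ) < B - ξ := by linarith [hξ1.2]
      have hxx : (0:ℝ) < x - ξ := by linarith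
      have hBy : (0:ℝ) < B + y := by linarith
      have h1y : (0:ℝ) < 1 - y := by linarith
      exact mul_pos (mul_pos (mul_pos (by linarith) (mul_pos h1mφ h1))
        (mul_pos h1y hBy)) hxx
    linarith
  -- Claim B : x < y via the key identity
  have hid : (y - x) * (B + φ * y) = (1 - x * y) * (y - ξ) := by
    rw [hξ]; linear_combination (-(1:ℝ)/2) * hP
  have h1mxy : (0:ℝ) < 1 - x * y := by nlinarith
  have hBφy : (0:ℝ) < B + φ * y := by
    have : |φ * y| < B := by
      rw [abs_mul]
      calc |φ| * |y| ≤ |φ| * 1 := by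
            exact mul_le_mul_of_nonneg_left (le_of_lt (abs_lt.mpr ⟨hy1, hy2⟩)) (abs_nonneg φ)
        _ = |φ| := mul_one _
        _ < 1 / B := hφ
        _ ≤ 1 := by rw [div_le_one hB0]; linarith
        _ < B := hB
    linarith [(abs_lt.mp this).1]
  have hxy : x < y := by nlinarith [hid, mul_pos h1mxy (by linarith : (0:ℝ) < y - ξ)]
  exact ⟨hxy, hyξ⟩

/-- Increasing case of the main theorem. -/
lemma main_inc (B φ Φ ξ : ℝ) (hB : 1 < B) (hφ : |φ| < 1 / B)
    (hΦ : Φ = (1 + φ) / (1 - φ)) (hξ : ξ = -φ * B)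
    (x : ℕ → ℝ) (hmem : ∀ i, x i ∈ Set.Ioo (-1 : ℝ) 1)
    (hbal : ∀ i, Φ * (B + x (i + 1)) * (1 + x i) * (1 - x (i + 1)) =
      (B - x (i + 1)) * (1 - x i) * (1 + x (i + 1)))
    (h0 : ξ < x 0) : StrictMono x ∧ Tendsto x atTop (nhds 1) := by
  have hstep : ∀ i, ξ < x i → x i < x (i + 1) ∧ ξ < x (i + 1) := fun i h =>
    step_inc B φ Φ ξ hB hφ hΦ hξ (hmem i).1 (hmem i).2 (hmem (i+1)).1 (hmem (i+1)).2
      (hbal i) h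
  have hgt : ∀ i, ξ < x i := by
    intro i; induction i with
    | zero => exact h0
    | succ n ih => exact (hstep n ih).2
  have hmono : StrictMono x := strictMono_nat_of_lt_succ (fun n => (hstep n (hgt n)).1)
  refine ⟨hmono, ?_⟩
  have hbdd : BddAbove (Set.range x) := ⟨1, by rintro _ ⟨n, rfl⟩; exact le_of_lt (hmem n).2⟩
  set L : ℝ := ⨆ n, x n with hL
  have htend : Tendsto x atTop (nhds L) := tendsto_atTop_ciSup hmono.monotone hbdd
  have hLle : L ≤ 1 := ciSup_le (fun n => le_of_lt (hmem n).2)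
  have hLge : x 0 ≤ L := le_ciSup hbdd 0
  have hL1 : L = 1 := by
    by_contra hne
    have hLlt : L < 1 := lt_of_le_of_ne hLle hne
    have htend' : Tendsto (fun n => x (n + 1)) atTop (nhds L) :=
      htend.comp (tendsto_add_atTop_nat 1)
    have hlhs : Tendsto (fun n => Φ * (B + x (n + 1)) * (1 + x n) * (1 - x (n + 1)))
        atTop (nhds (Φ * (B + L) * (1 + L) * (1 - L))) :=
      (((tendsto_const_nhds.mul (tendsto_const_nhds.add htend')).mul
        (tendsto_const_nhds.add htend)).mul (tendsto_const_nhds.sub htend'))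
    have hrhs : Tendsto (fun n => (B - x (n + 1)) * (1 - x n) * (1 + x (n + 1)))
        atTop (nhds ((B - L) * (1 - L) * (1 + L))) :=
      (((tendsto_const_nhds.sub htend').mul (tendsto_const_nhds.sub htend)).mul
        (tendsto_const_nhds.add htend'))
    have heqlim : Φ * (B + L) * (1 + L) * (1 - L) = (B - L) * (1 - L) * (1 + L) := by
      apply tendsto_nhds_unique (hlhs.congr (fun n => (hbal n))) hrhs
    have hL1' : -1 < L := lt_of_lt_of_le (hmem 0).1 hLge
    have hξL : ξ < L := lt_of_lt_of_le h0 hLge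
    have h1mL : (0:ℝ) < 1 - L := by linarith
    have h1pL : (0:ℝ) < 1 + L := by linarith
    have hB0 : (0:ℝ) < B := by linarith
    have hφ1 : |φ| < 1 := lt_trans hφ (by rw [div_lt_one hB0]; exact hB)
    have hφlt := (abs_lt.mp hφ1)
    have h1mφ : (0:ℝ) < 1 - φ := by linarith [hφlt.2]
    have hΦmul : Φ * (1 - φ) = 1 + φ := by rw [hΦ]; field_simp
    have hcanc : Φ * (B + L) = B - L := by
      have hne' : (1 + L) * (1 - L) ≠ 0 := by positivity
      have : (Φ * (B + L)) * ((1 + L) * (1 - L)) = (B - L) * ((1 + L) * (1 - L)) := by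
        linear_combination heqlim
      exact mul_right_cancel₀ hne' this
    have : L = ξ := by
      rw [hξ]
      have h2 : (1 + φ) * (B + L) = (1 - φ) * (B - L) := by
        linear_combination (1 - φ) * hcanc - (B + L) * hΦmul
      nlinarith [h2]
    linarith [hξL, this]
  exact hL1 ▸ htend

/-- For B > 1, |φ| < 1/B, Φ = (1+φ)/(1−φ) and ξ = −φB, let
(x_i) ⊂ (−1,1) satisfy the stationary balance relation at every step. If
x₀ ∈ (ξ,1) then (x_i) strictly increases to 1; if x₀ ∈ (−1,ξ) then (x_i)
strictly decreases to −1. -/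
theorem stationary_sequence_convergence (B φ : ℝ) (hB : 1 < B) (hφ : |φ| < 1 / B)
    (Φ ξ : ℝ) (hΦ : Φ = (1 + φ) / (1 - φ)) (hξ : ξ = -φ * B)
    (x : ℕ → ℝ) (hmem : ∀ i, x i ∈ Set.Ioo (-1 : ℝ) 1)
    (hbal : ∀ i, Φ * (B + x (i + 1)) * (1 + x i) * (1 - x (i + 1)) =
      (B - x (i + 1)) * (1 - x i) * (1 + x (i + 1))) :
    (x 0 ∈ Set.Ioo ξ 1 → StrictMono x ∧ Tendsto x atTop (nhds 1)) ∧
    (x 0 ∈ Set.Ioo (-1 : ℝ) ξ → StrictAnti x ∧ Tendsto x atTop (nhds (-1))) := by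
  constructor
  · intro h0
    exact main_inc B φ Φ ξ hB hφ hΦ hξ x hmem hbal h0.1
  · intro h0
    -- apply the increasing case to the negated sequence with φ ↦ -φ
    have hB0 : (0:ℝ) < B := by linarith
    have hφ1 : |φ| < 1 := lt_trans hφ (by rw [div_lt_one hB0]; exact hB)
    have hφlt := (abs_lt.mp hφ1)
    have h1mφ : (0:ℝ) < 1 - φ := by linarith [hφlt.2]
    have h1pφ : (0:ℝ) < 1 + φ := by linarith [hφlt.1]
    have hΦpos : 0 < Φ := by rw [hΦ]; positivity
    set Φ' : ℝ := (1 + -φ) / (1 - -φ) with hΦ'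
    have hΦΦ' : Φ * Φ' = 1 := by
      rw [hΦ, hΦ', div_mul_div_comm, div_eq_one_iff_eq (mul_pos h1mφ (by linarith)).ne']; ring
    have hmem' : ∀ i, (fun n => -x n) i ∈ Set.Ioo (-1 : ℝ) 1 := by
      intro i
      refine ⟨?_, ?_⟩
      · show (-1:ℝ) < -x i; linarith [(hmem i).2]
      · show -x i < (1:ℝ); linarith [(hmem i).1]
    have hbal' : ∀ i, Φ' * (B + (fun n => -x n) (i + 1)) * (1 + (fun n => -x n) i)
        * (1 - (fun n => -x n) (i + 1)) =
        (B - (fun n => -x n) (i + 1)) * (1 - (fun n => -x n) i)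
        * (1 + (fun n => -x n) (i + 1)) := by
      intro i
      simp only
      linear_combination (-Φ') * hbal i
        + ((B + x (i+1)) * (1 + x i) * (1 - x (i+1))) * hΦΦ'
    have h0' : -ξ < (fun n => -x n) 0 := by simpa using h0.2
    have hξ' : -ξ = -(-φ) * B := by rw [hξ]; ring
    obtain ⟨hm, ht⟩ := main_inc B (-φ) Φ' (-ξ) hB (by simpa using hφ) hΦ' hξ'
      (fun n => -x n) hmem' hbal' h0'
    constructor
    · intro a b hab
      have := hm hab
      simpa using this
    · have := ht.neg
      simpa using this
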